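/- Let R = ℤ[η, y]/(η y − 2), graded by ℤ with deg η = −1 and deg y = 1 (and ℤ in degree 0). Then the homogeneous prime ideals of R are exactly: (0); (p) for each odd prime p; (2, η); (2, y); and (2, η, y). -/

import Mathlib

/-- The ring `R = ℤ[η, y]/(η y - 2)`, where `η` is variable `0` and `y` is
variable `1`. -/
abbrev ReesRing : Type :=
  MvPolynomial (Fin 2) ℤ ⧸
    Ideal.span {(MvPolynomial.X 0 * MvPolynomial.X 1 - 2 : MvPolynomial (Fin 2) ℤ)}

namespace ReesRing

/-- The quotient map. -/
noncomputable def mk : MvPolynomial (Fin 2) ℤ →+* ReesRing :=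
  Ideal.Quotient.mk _

/-- The class of `η`. -/
noncomputable def eta : ReesRing := mk (MvPolynomial.X 0)

/-- The class of `y`. -/
noncomputable def y : ReesRing := mk (MvPolynomial.X 1)

/-- The grading weights: `deg η = -1`, `deg y = 1`. -/
def wt : Fin 2 → ℤ := ![-1, 1]

/-- An element of `R` is homogeneous of degree `n` if it is the class of a polynomial
which is weighted-homogeneous of degree `n` for the weights `deg η = -1`, `deg y = 1`. -/
def IsHomogeneous (n : ℤ) (x : ReesRing) : Prop :=
  ∃ φ : MvPolynomial (Fin 2) ℤ, φ.IsWeightedHomogeneous wt n ∧ x = mk φ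

/-- A homogeneous prime ideal: a prime ideal generated by homogeneous elements. -/
def IsHomogeneousPrime (J : Ideal ReesRing) : Prop :=
  J.IsPrime ∧ ∃ S : Set ReesRing, (∀ x ∈ S, ∃ n, IsHomogeneous n x) ∧ J = Ideal.span S

end ReesRing

namespace ReesRing

open MvPolynomial

local notation "P" => MvPolynomial (Fin 2) ℤ
local notation "gg" => (MvPolynomial.X 0 * MvPolynomial.X 1 - 2 : MvPolynomial (Fin 2) ℤ)

lemma mk_surjective : Function.Surjective mk := Ideal.Quotient.mk_surjective

lemma ker_mk : RingHom.ker mk = Ideal.span {gg} := Ideal.mk_ker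

lemma mk_g : mk gg = 0 :=
  Ideal.Quotient.eq_zero_iff_mem.mpr (Ideal.subset_span rfl)

lemma eta_mul_y : eta * y = 2 := by
  have h := mk_g
  rw [map_sub, map_mul, sub_eq_zero] at h
  exact h.trans (map_ofNat mk 2)

lemma eta_pow_mul_y_pow (a b : ℕ) : eta ^ a * y ^ (a + b) = 2 ^ a * y ^ b := by
  induction a with
  | zero => simp
  | succ a ih =>
    have : eta ^ (a + 1) * y ^ (a + 1 + b) = (eta ^ a * y ^ (a + b)) * (eta * y) := by
      ring
    rw [this, ih, eta_mul_y]; ring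

lemma y_pow_mul_eta_pow (a b : ℕ) : eta ^ (a + b) * y ^ a = 2 ^ a * eta ^ b := by
  induction a with
  | zero => simp
  | succ a ih =>
    have : eta ^ (a + 1 + b) * y ^ (a + 1) = (eta ^ (a + b) * y ^ a) * (eta * y) := by
      ring
    rw [this, ih, eta_mul_y]; ring

lemma mk_monomial (d : Fin 2 →₀ ℕ) (c : ℤ) :
    mk (monomial d c) = (c : ReesRing) * eta ^ (d 0) * y ^ (d 1) := by
  rw [monomial_eq, Finsupp.prod_pow, Fin.prod_univ_two]
  rw [map_mul, map_mul, map_pow, map_pow]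
  simp [eta, y, mk, map_intCast]
  ring

lemma weight_eq {d : Fin 2 →₀ ℕ} {n : ℤ} (h : (Finsupp.weight wt) d = n) :
    (d 1 : ℤ) - (d 0 : ℤ) = n := by
  rw [Finsupp.weight_apply] at h
  rw [Finsupp.sum_fintype _ _ (by intro i; simp)] at h
  rw [Fin.sum_univ_two] at h
  simp only [wt] at h
  simp only [Matrix.cons_val_zero, Matrix.cons_val_one, Matrix.head_cons,
    smul_eq_mul, nsmul_eq_mul] at h
  push_cast at h
  linarith [h]

/-- Structure of homogeneous elements: every homogeneous element of degree `n` is an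
integer multiple of `y ^ n` (if `n ≥ 0`) or of `η ^ (-n)` (if `n ≤ 0`). -/
lemma structure_of_isHomogeneous {n : ℤ} {x : ReesRing} (h : IsHomogeneous n x) :
    ∃ c : ℤ, x = (c : ReesRing) * y ^ n.toNat ∨ x = (c : ReesRing) * eta ^ (-n).toNat := by
  obtain ⟨φ, hφ, rfl⟩ := h
  rcases le_or_gt 0 n with hn | hn
  · -- x ∈ zmultiples (y ^ n.toNat)
    have key : mk φ ∈ AddSubgroup.zmultiples ((y : ReesRing) ^ n.toNat) := by
      have hsum : mk φ = ∑ d ∈ φ.support, mk (monomial d (coeff d φ)) := by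
        rw [← map_sum, support_sum_monomial_coeff]
      rw [hsum]
      apply AddSubgroup.sum_mem
      intro d hd
      have hw : (d 1 : ℤ) - (d 0 : ℤ) = n := weight_eq (hφ (mem_support_iff.mp hd))
      have hd1 : d 1 = d 0 + n.toNat := by omega
      have : mk (monomial d (coeff d φ))
          = ((coeff d φ * 2 ^ (d 0) : ℤ) : ReesRing) * y ^ n.toNat := by
        rw [mk_monomial, hd1]
        rw [mul_assoc, eta_pow_mul_y_pow]
        push_cast
        ring
      rw [this, ← zsmul_eq_mul]
      exact AddSubgroup.zsmul_mem_zmultiples _ _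
    obtain ⟨k, hk⟩ := AddSubgroup.mem_zmultiples_iff.mp key
    exact ⟨k, Or.inl (by rw [← hk, zsmul_eq_mul])⟩
  · have key : mk φ ∈ AddSubgroup.zmultiples ((eta : ReesRing) ^ (-n).toNat) := by
      have hsum : mk φ = ∑ d ∈ φ.support, mk (monomial d (coeff d φ)) := by
        rw [← map_sum, support_sum_monomial_coeff]
      rw [hsum]
      apply AddSubgroup.sum_mem
      intro d hd
      have hw : (d 1 : ℤ) - (d 0 : ℤ) = n := weight_eq (hφ (mem_support_iff.mp hd))
      have hd1 : d 0 = d 1 + (-n).toNat := by omega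
      have : mk (monomial d (coeff d φ))
          = ((coeff d φ * 2 ^ (d 1) : ℤ) : ReesRing) * eta ^ (-n).toNat := by
        rw [mk_monomial, hd1]
        have h2 := y_pow_mul_eta_pow (d 1) ((-n).toNat)
        set c : ℤ := coeff d φ with hc
        calc (c : ReesRing) * eta ^ (d 1 + (-n).toNat) * y ^ (d 1)
            = (c : ReesRing) * (eta ^ (d 1 + (-n).toNat) * y ^ (d 1)) := by ring
          _ = (c : ReesRing) * (2 ^ (d 1) * eta ^ (-n).toNat) := by rw [h2]
          _ = ((c * 2 ^ (d 1) : ℤ) : ReesRing) * eta ^ (-n).toNat := by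
              push_cast; ring
      rw [this, ← zsmul_eq_mul]
      exact AddSubgroup.zsmul_mem_zmultiples _ _
    obtain ⟨k, hk⟩ := AddSubgroup.mem_zmultiples_iff.mp key
    exact ⟨k, Or.inr (by rw [← hk, zsmul_eq_mul])⟩

section Primality

open Polynomial in
lemma irreducible_linear {B : Type*} [CommRing B] [IsDomain B] {t c : B}
    (ht : Prime t) (htc : ¬ t ∣ c) :
    Irreducible (Polynomial.C t * Polynomial.X - Polynomial.C c) := by
  have hne : (Polynomial.C t * Polynomial.X - Polynomial.C c).degree = 1 := by
    rw [sub_eq_add_neg, ← Polynomial.C_neg]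
    exact Polynomial.degree_linear ht.ne_zero
  have key : ∀ f g : B[X], Polynomial.C t * Polynomial.X - Polynomial.C c = f * g →
      f.natDegree = 0 → IsUnit f := by
    intro f g hfg hdeg
    obtain ⟨a, rfl⟩ := Polynomial.natDegree_eq_zero.mp hdeg
    have hdvd : Polynomial.C a ∣ Polynomial.C t * Polynomial.X - Polynomial.C c :=
      ⟨g, hfg⟩
    rw [Polynomial.C_dvd_iff_dvd_coeff] at hdvd
    have h1 : a ∣ t := by simpa using hdvd 1
    have h0 : a ∣ c := by
      have := hdvd 0
      simp only [Polynomial.coeff_sub, Polynomial.coeff_C_mul, Polynomial.coeff_X_zero,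
        Polynomial.coeff_C_zero, mul_zero, zero_sub] at this
      exact dvd_neg.mp this
    obtain ⟨b, rfl⟩ := h1
    rcases ht.irreducible.isUnit_or_isUnit rfl with ha | hb
    · exact Polynomial.isUnit_C.mpr ha
    · exfalso
      apply htc
      exact dvd_trans ((hb.mul_right_dvd).mpr dvd_rfl) h0
  constructor
  · apply Polynomial.not_isUnit_of_degree_pos
    rw [hne]; decide
  · intro f g hfg
    have hf0 : f ≠ 0 := by
      rintro rfl
      rw [zero_mul] at hfg
      simp [hfg] at hne
    have hg0 : g ≠ 0 := by
      rintro rfl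
      rw [mul_zero] at hfg
      simp [hfg] at hne
    have hnd : f.natDegree + g.natDegree = 1 := by
      have := Polynomial.natDegree_eq_of_degree_eq_some hne
      rw [hfg, Polynomial.natDegree_mul hf0 hg0] at this
      exact this
    rcases Nat.eq_zero_or_pos f.natDegree with h | h
    · exact Or.inl (key f g hfg h)
    · exact Or.inr (key g f (by rw [hfg]; ring) (by omega))

lemma prime_X0 {A : Type*} [CommRing A] [IsDomain A] :
    Prime (MvPolynomial.X 0 : MvPolynomial (Fin 1) A) := by
  rw [← MulEquiv.prime_iff (MvPolynomial.finSuccEquiv A 0).toMulEquiv]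
  have : (MvPolynomial.finSuccEquiv A 0).toMulEquiv (MvPolynomial.X 0 : MvPolynomial (Fin 1) A)
      = Polynomial.X := by
    show (MvPolynomial.finSuccEquiv A 0) (MvPolynomial.X 0) = _
    exact MvPolynomial.finSuccEquiv_X_zero
  rw [this]
  exact Polynomial.prime_X

lemma prime_g {A : Type*} [CommRing A] [IsDomain A] [UniqueFactorizationMonoid A]
    (h2 : (2 : A) ≠ 0) :
    Prime (MvPolynomial.X 0 * MvPolynomial.X 1 - 2 : MvPolynomial (Fin 2) A) := by
  rw [← MulEquiv.prime_iff (MvPolynomial.finSuccEquiv A 1).toMulEquiv]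
  have h1 : ((1 : Fin 2)) = Fin.succ 0 := rfl
  have himg : (MvPolynomial.finSuccEquiv A 1).toMulEquiv
      (MvPolynomial.X 0 * MvPolynomial.X 1 - 2 : MvPolynomial (Fin 2) A)
      = Polynomial.C (MvPolynomial.X 0) * Polynomial.X - Polynomial.C 2 := by
    show (MvPolynomial.finSuccEquiv A 1)
      (MvPolynomial.X 0 * MvPolynomial.X 1 - 2 : MvPolynomial (Fin 2) A) = _
    rw [map_sub, map_mul, h1, MvPolynomial.finSuccEquiv_X_zero, MvPolynomial.finSuccEquiv_X_succ,
      map_ofNat]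
    rw [show ((2 : Polynomial (MvPolynomial (Fin 1) A))) = Polynomial.C 2 from (map_ofNat _ 2).symm]
    ring
  rw [himg, ← UniqueFactorizationMonoid.irreducible_iff_prime]
  apply irreducible_linear prime_X0
  intro hdvd
  have hd2 := map_dvd (MvPolynomial.constantCoeff (σ := Fin 1) (R := A)) hdvd
  rw [MvPolynomial.constantCoeff_X, map_ofNat] at hd2
  exact h2 (zero_dvd_iff.mp hd2)

end Primality

section Domain

lemma prime_g_int : Prime gg := prime_g (by norm_num)

lemma isDomain_reesRing : IsDomain ReesRing := by
  haveI : (Ideal.span {gg}).IsPrime :=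
    (Ideal.span_singleton_prime prime_g_int.ne_zero).mpr prime_g_int
  exact Ideal.Quotient.isDomain _

lemma bot_prime : (⊥ : Ideal ReesRing).IsPrime := by
  haveI := isDomain_reesRing
  exact Ideal.bot_prime

end Domain

section SpanP

lemma mk_C_int (a : ℤ) : mk (MvPolynomial.C a) = (a : ReesRing) := by
  simp [mk, map_intCast]

lemma span_p_prime {p : ℕ} (hp : p.Prime) (hp2 : p ≠ 2) :
    (Ideal.span {((p : ℕ) : ReesRing)}).IsPrime := by
  haveI : Fact p.Prime := ⟨hp⟩
  set f : MvPolynomial (Fin 2) ℤ →+* MvPolynomial (Fin 2) (ZMod p) :=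
    MvPolynomial.map (Int.castRingHom (ZMod p)) with hf
  have h2 : (2 : ZMod p) ≠ 0 := by
    intro h
    have h' : ((2 : ℕ) : ZMod p) = 0 := by push_cast; exact h
    rw [ZMod.natCast_eq_zero_iff] at h'
    exact hp2 ((Nat.prime_dvd_prime_iff_eq hp Nat.prime_two).mp h')
  have hgp : Prime (MvPolynomial.X 0 * MvPolynomial.X 1 - 2 :
      MvPolynomial (Fin 2) (ZMod p)) := prime_g h2
  have hfg : f gg = (MvPolynomial.X 0 * MvPolynomial.X 1 - 2 :
      MvPolynomial (Fin 2) (ZMod p)) := by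
    simp [hf]
  have hK : Ideal.span {gg, MvPolynomial.C (p : ℤ)} =
      Ideal.comap f (Ideal.span {(MvPolynomial.X 0 * MvPolynomial.X 1 - 2 :
      MvPolynomial (Fin 2) (ZMod p))}) := by
    apply le_antisymm
    · rw [Ideal.span_le]
      rintro x hx
      simp only [Set.mem_insert_iff, Set.mem_singleton_iff] at hx
      rcases hx with rfl | rfl
      · rw [SetLike.mem_coe, Ideal.mem_comap, hfg]
        exact Ideal.subset_span rfl
      · rw [SetLike.mem_coe, Ideal.mem_comap]
        have : f (MvPolynomial.C (p : ℤ)) = 0 := by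
          simp [hf, MvPolynomial.map_C]
        rw [this]
        exact Ideal.zero_mem _
    · intro φ hφ
      rw [Ideal.mem_comap, Ideal.mem_span_singleton] at hφ
      obtain ⟨ψ', hψ'⟩ := hφ
      obtain ⟨ψ, rfl⟩ := MvPolynomial.map_surjective (Int.castRingHom (ZMod p))
        (fun a => ZMod.intCast_surjective a) ψ'
      have hmap : f (φ - gg * ψ) = 0 := by
        rw [map_sub, map_mul, hψ', hfg]
        ring
      have hdvd : MvPolynomial.C ((p : ℕ) : ℤ) ∣ (φ - gg * ψ) := by
        rw [MvPolynomial.C_dvd_iff_dvd_coeff]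
        intro i
        have hc := congrArg (MvPolynomial.coeff i) hmap
        rw [hf, MvPolynomial.coeff_map, MvPolynomial.coeff_zero] at hc
        exact (ZMod.intCast_zmod_eq_zero_iff_dvd _ p).mp hc
      obtain ⟨w, hw⟩ := hdvd
      have hφeq : φ = gg * ψ + MvPolynomial.C ((p : ℕ) : ℤ) * w := by
        rw [← hw]; ring
      rw [hφeq]
      exact Ideal.add_mem _
        (Ideal.mul_mem_right _ _ (Ideal.subset_span (by simp)))
        (Ideal.mul_mem_right _ _ (Ideal.subset_span (by simp)))
  haveI hKp : (Ideal.span {gg, MvPolynomial.C (p : ℤ)}).IsPrime := by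
    rw [hK]
    haveI := (Ideal.span_singleton_prime hgp.ne_zero).mpr hgp
    exact Ideal.IsPrime.comap f
  have hmapspan : Ideal.map mk (Ideal.span {gg, MvPolynomial.C (p : ℤ)}) =
      Ideal.span {((p : ℕ) : ReesRing)} := by
    rw [Ideal.map_span, Set.image_insert_eq, Set.image_singleton, mk_g, mk_C_int]
    have h0 : (Ideal.span {0, (((p : ℕ) : ℤ) : ReesRing)}) =
        Ideal.span {(((p : ℕ) : ℤ) : ReesRing)} := Submodule.span_insert_zero
    rw [h0]
    norm_num
  rw [← hmapspan]
  exact Ideal.map_isPrime_of_surjective mk_surjective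
    (by rw [ker_mk]; exact Ideal.span_mono (by simp))

end SpanP

section Span2Eta

/-- evaluation of `X 0 := 0`, keeping `X 1`, into `ℤ[T]`. -/
noncomputable def rho0 : MvPolynomial (Fin 2) ℤ →+* Polynomial ℤ :=
  MvPolynomial.eval₂Hom Polynomial.C ![0, Polynomial.X]

/-- evaluation of `X 1 := 0`, keeping `X 0`, into `ℤ[T]`. -/
noncomputable def rho1 : MvPolynomial (Fin 2) ℤ →+* Polynomial ℤ :=
  MvPolynomial.eval₂Hom Polynomial.C ![Polynomial.X, 0]

/-- inclusion `ℤ[T] → ℤ[X0,X1]`, `T ↦ X i`. -/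
noncomputable def iota (i : Fin 2) : Polynomial ℤ →+* MvPolynomial (Fin 2) ℤ :=
  Polynomial.eval₂RingHom MvPolynomial.C (MvPolynomial.X i)

lemma iota_C (i : Fin 2) (a : ℤ) : iota i (Polynomial.C a) = MvPolynomial.C a :=
  Polynomial.eval₂_C _ _

lemma iota_X (i : Fin 2) : iota i Polynomial.X = MvPolynomial.X i :=
  Polynomial.eval₂_X _ _

lemma reduce0 (φ : P) : φ - iota 1 (rho0 φ) ∈ Ideal.span {(MvPolynomial.X 0 : P)} := by
  induction φ using MvPolynomial.induction_on with
  | C a => simp [rho0, iota_C]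
  | add p q hp hq =>
    have : p + q - iota 1 (rho0 (p + q)) =
        (p - iota 1 (rho0 p)) + (q - iota 1 (rho0 q)) := by
      rw [map_add, map_add]; ring
    rw [this]; exact Ideal.add_mem _ hp hq
  | mul_X p i hp =>
    fin_cases i
    · show p * MvPolynomial.X 0 - iota 1 (rho0 (p * MvPolynomial.X 0)) ∈ _
      have : rho0 (p * MvPolynomial.X 0) = 0 := by
        rw [map_mul]
        simp [rho0]
      rw [this, map_zero, sub_zero]
      exact Ideal.mul_mem_left _ _ (Ideal.subset_span rfl)
    · show p * MvPolynomial.X 1 - iota 1 (rho0 (p * MvPolynomial.X 1)) ∈ _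
      have hx : rho0 (MvPolynomial.X 1) = Polynomial.X := by simp [rho0]
      have : iota 1 (rho0 (p * MvPolynomial.X 1)) = iota 1 (rho0 p) * MvPolynomial.X 1 := by
        rw [map_mul, hx, map_mul, iota_X]
      rw [this]
      have heq : p * MvPolynomial.X 1 - iota 1 (rho0 p) * MvPolynomial.X 1 =
          (p - iota 1 (rho0 p)) * MvPolynomial.X 1 := by ring
      rw [heq]
      exact Ideal.mul_mem_right _ _ hp

lemma reduce1 (φ : P) : φ - iota 0 (rho1 φ) ∈ Ideal.span {(MvPolynomial.X 1 : P)} := by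
  induction φ using MvPolynomial.induction_on with
  | C a => simp [rho1, iota_C]
  | add p q hp hq =>
    have : p + q - iota 0 (rho1 (p + q)) =
        (p - iota 0 (rho1 p)) + (q - iota 0 (rho1 q)) := by
      rw [map_add, map_add]; ring
    rw [this]; exact Ideal.add_mem _ hp hq
  | mul_X p i hp =>
    fin_cases i
    · show p * MvPolynomial.X 0 - iota 0 (rho1 (p * MvPolynomial.X 0)) ∈ _
      have hx : rho1 (MvPolynomial.X 0) = Polynomial.X := by simp [rho1]
      have : iota 0 (rho1 (p * MvPolynomial.X 0)) = iota 0 (rho1 p) * MvPolynomial.X 0 := by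
        rw [map_mul, hx, map_mul, iota_X]
      rw [this]
      have heq : p * MvPolynomial.X 0 - iota 0 (rho1 p) * MvPolynomial.X 0 =
          (p - iota 0 (rho1 p)) * MvPolynomial.X 0 := by ring
      rw [heq]
      exact Ideal.mul_mem_right _ _ hp
    · show p * MvPolynomial.X 1 - iota 0 (rho1 (p * MvPolynomial.X 1)) ∈ _
      have : rho1 (p * MvPolynomial.X 1) = 0 := by
        rw [map_mul]
        simp [rho1]
      rw [this, map_zero, sub_zero]
      exact Ideal.mul_mem_left _ _ (Ideal.subset_span rfl)

/-- the map `R → 𝔽₂[T]`, `η ↦ 0`, `y ↦ T`. -/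
noncomputable def G0 : MvPolynomial (Fin 2) ℤ →+* Polynomial (ZMod 2) :=
  MvPolynomial.eval₂Hom (Polynomial.C.comp (Int.castRingHom (ZMod 2))) ![0, Polynomial.X]

/-- the map `R → 𝔽₂[T]`, `y ↦ 0`, `η ↦ T`. -/
noncomputable def G1 : MvPolynomial (Fin 2) ℤ →+* Polynomial (ZMod 2) :=
  MvPolynomial.eval₂Hom (Polynomial.C.comp (Int.castRingHom (ZMod 2))) ![Polynomial.X, 0]

lemma G0_eq : G0 = (Polynomial.mapRingHom (Int.castRingHom (ZMod 2))).comp rho0 := by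
  apply MvPolynomial.ringHom_ext
  · intro r
    simp [G0, rho0]
  · intro i
    fin_cases i
    · simp [G0, rho0]
    · simp [G0, rho0]

lemma G1_eq : G1 = (Polynomial.mapRingHom (Int.castRingHom (ZMod 2))).comp rho1 := by
  apply MvPolynomial.ringHom_ext
  · intro r
    simp [G1, rho1]
  · intro i
    fin_cases i
    · simp [G1, rho1]
    · simp [G1, rho1]

lemma ker_G0 : RingHom.ker G0 = Ideal.span {(MvPolynomial.C 2 : P), MvPolynomial.X 0} := by
  apply le_antisymm
  · intro φ hφ
    rw [RingHom.mem_ker, G0_eq, RingHom.comp_apply] at hφ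
    have hdvd : Polynomial.C (2 : ℤ) ∣ rho0 φ := by
      rw [Polynomial.C_dvd_iff_dvd_coeff]
      intro i
      have hc := congrArg (fun q => Polynomial.coeff q i) hφ
      simp only [Polynomial.coeff_map, Polynomial.coeff_zero, Polynomial.coe_mapRingHom] at hc
      have := (ZMod.intCast_zmod_eq_zero_iff_dvd ((rho0 φ).coeff i) 2).mp hc
      exact_mod_cast this
    obtain ⟨v, hv⟩ := hdvd
    have hφeq : φ = (φ - iota 1 (rho0 φ)) + MvPolynomial.C 2 * iota 1 v := by
      rw [← iota_C 1 2, ← map_mul, ← hv]; ring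
    rw [hφeq]
    apply Ideal.add_mem
    · exact Ideal.span_mono (by simp) (reduce0 φ)
    · exact Ideal.mul_mem_right _ _ (Ideal.subset_span (by simp))
  · rw [Ideal.span_le]
    rintro x hx
    simp only [Set.mem_insert_iff, Set.mem_singleton_iff] at hx
    rcases hx with rfl | rfl
    · rw [SetLike.mem_coe, RingHom.mem_ker]
      simp [G0]
      have h20 : (2 : ZMod 2) = 0 := by decide
      rw [show (2 : Polynomial (ZMod 2)) = Polynomial.C 2 from (map_ofNat _ 2).symm, h20,
        map_zero]
    · rw [SetLike.mem_coe, RingHom.mem_ker]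
      simp [G0]

lemma ker_G1 : RingHom.ker G1 = Ideal.span {(MvPolynomial.C 2 : P), MvPolynomial.X 1} := by
  apply le_antisymm
  · intro φ hφ
    rw [RingHom.mem_ker, G1_eq, RingHom.comp_apply] at hφ
    have hdvd : Polynomial.C (2 : ℤ) ∣ rho1 φ := by
      rw [Polynomial.C_dvd_iff_dvd_coeff]
      intro i
      have hc := congrArg (fun q => Polynomial.coeff q i) hφ
      simp only [Polynomial.coeff_map, Polynomial.coeff_zero, Polynomial.coe_mapRingHom] at hc
      have := (ZMod.intCast_zmod_eq_zero_iff_dvd ((rho1 φ).coeff i) 2).mp hc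
      exact_mod_cast this
    obtain ⟨v, hv⟩ := hdvd
    have hφeq : φ = (φ - iota 0 (rho1 φ)) + MvPolynomial.C 2 * iota 0 v := by
      rw [← iota_C 0 2, ← map_mul, ← hv]; ring
    rw [hφeq]
    apply Ideal.add_mem
    · exact Ideal.span_mono (by simp) (reduce1 φ)
    · exact Ideal.mul_mem_right _ _ (Ideal.subset_span (by simp))
  · rw [Ideal.span_le]
    rintro x hx
    simp only [Set.mem_insert_iff, Set.mem_singleton_iff] at hx
    rcases hx with rfl | rfl
    · rw [SetLike.mem_coe, RingHom.mem_ker]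
      simp [G1]
      have h20 : (2 : ZMod 2) = 0 := by decide
      rw [show (2 : Polynomial (ZMod 2)) = Polynomial.C 2 from (map_ofNat _ 2).symm, h20,
        map_zero]
    · rw [SetLike.mem_coe, RingHom.mem_ker]
      simp [G1]

lemma g_mem_2X0 : gg ∈ Ideal.span {(MvPolynomial.C 2 : P), MvPolynomial.X 0} := by
  apply Ideal.sub_mem
  · exact Ideal.mul_mem_right _ _ (Ideal.subset_span (by simp))
  · have : (2 : P) = MvPolynomial.C 2 := by norm_num
    rw [this]
    exact Ideal.subset_span (by simp)

lemma g_mem_2X1 : gg ∈ Ideal.span {(MvPolynomial.C 2 : P), MvPolynomial.X 1} := by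
  apply Ideal.sub_mem
  · rw [show (MvPolynomial.X 0 * MvPolynomial.X 1 : P) = MvPolynomial.X 1 * MvPolynomial.X 0
      from by ring]
    exact Ideal.mul_mem_right _ _ (Ideal.subset_span (by simp))
  · have : (2 : P) = MvPolynomial.C 2 := by norm_num
    rw [this]
    exact Ideal.subset_span (by simp)

lemma mk_C_two : mk (MvPolynomial.C (2:ℤ)) = (2 : ReesRing) := by
  rw [mk_C_int]; norm_num

lemma span_2eta_prime : (Ideal.span {(2 : ReesRing), eta}).IsPrime := by
  have hmapspan : Ideal.map mk (Ideal.span {(MvPolynomial.C 2 : P), MvPolynomial.X 0}) =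
      Ideal.span {(2 : ReesRing), eta} := by
    rw [Ideal.map_span, Set.image_insert_eq, Set.image_singleton, mk_C_two]
    rfl
  rw [← hmapspan]
  haveI : (Ideal.span {(MvPolynomial.C 2 : P), MvPolynomial.X 0}).IsPrime := by
    rw [← ker_G0]; exact RingHom.ker_isPrime G0
  exact Ideal.map_isPrime_of_surjective mk_surjective
    (by rw [ker_mk, Ideal.span_le]; simpa using g_mem_2X0)

lemma span_2y_prime : (Ideal.span {(2 : ReesRing), y}).IsPrime := by
  have hmapspan : Ideal.map mk (Ideal.span {(MvPolynomial.C 2 : P), MvPolynomial.X 1}) =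
      Ideal.span {(2 : ReesRing), y} := by
    rw [Ideal.map_span, Set.image_insert_eq, Set.image_singleton, mk_C_two]
    rfl
  rw [← hmapspan]
  haveI : (Ideal.span {(MvPolynomial.C 2 : P), MvPolynomial.X 1}).IsPrime := by
    rw [← ker_G1]; exact RingHom.ker_isPrime G1
  exact Ideal.map_isPrime_of_surjective mk_surjective
    (by rw [ker_mk, Ideal.span_le]; simpa using g_mem_2X1)

/-- the map `R → 𝔽₂`, `η ↦ 0`, `y ↦ 0`. -/
noncomputable def G2 : MvPolynomial (Fin 2) ℤ →+* ZMod 2 :=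
  MvPolynomial.eval₂Hom (Int.castRingHom (ZMod 2)) ![0, 0]

lemma G2_eq : G2 = (Int.castRingHom (ZMod 2)).comp MvPolynomial.constantCoeff := by
  apply MvPolynomial.ringHom_ext
  · intro r
    simp [G2]
  · intro i
    fin_cases i <;> simp [G2]

lemma reduce2 (φ : P) : φ - MvPolynomial.C (MvPolynomial.constantCoeff φ) ∈
    Ideal.span {(MvPolynomial.X 0 : P), MvPolynomial.X 1} := by
  induction φ using MvPolynomial.induction_on with
  | C a => simp
  | add p q hp hq =>
    have : p + q - MvPolynomial.C (MvPolynomial.constantCoeff (p + q)) =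
        (p - MvPolynomial.C (MvPolynomial.constantCoeff p)) +
        (q - MvPolynomial.C (MvPolynomial.constantCoeff q)) := by
      rw [map_add, map_add]; ring
    rw [this]; exact Ideal.add_mem _ hp hq
  | mul_X p i hp =>
    have : MvPolynomial.constantCoeff (p * MvPolynomial.X i) = 0 := by
      rw [map_mul, MvPolynomial.constantCoeff_X, mul_zero]
    rw [this, map_zero, sub_zero]
    apply Ideal.mul_mem_left
    fin_cases i
    · exact Ideal.subset_span (by simp)
    · exact Ideal.subset_span (by simp)

lemma ker_G2 : RingHom.ker G2 =
    Ideal.span {(MvPolynomial.C 2 : P), MvPolynomial.X 0, MvPolynomial.X 1} := by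
  apply le_antisymm
  · intro φ hφ
    rw [RingHom.mem_ker, G2_eq, RingHom.comp_apply] at hφ
    have hdvd : (2:ℤ) ∣ MvPolynomial.constantCoeff φ :=
      (ZMod.intCast_zmod_eq_zero_iff_dvd _ 2).mp (by exact_mod_cast hφ)
    obtain ⟨v, hv⟩ := hdvd
    have hφeq : φ = (φ - MvPolynomial.C (MvPolynomial.constantCoeff φ)) +
        MvPolynomial.C 2 * MvPolynomial.C v := by
      rw [← map_mul, ← hv]; ring
    rw [hφeq]
    apply Ideal.add_mem
    · apply Ideal.span_mono _ (reduce2 φ)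
      intro x hx
      simp only [Set.mem_insert_iff, Set.mem_singleton_iff] at hx
      rcases hx with rfl | rfl <;> simp
    · exact Ideal.mul_mem_right _ _ (Ideal.subset_span (by simp))
  · rw [Ideal.span_le]
    rintro x hx
    simp only [Set.mem_insert_iff, Set.mem_singleton_iff] at hx
    rcases hx with rfl | rfl | rfl <;>
        (rw [SetLike.mem_coe, RingHom.mem_ker]; simp [G2]) <;> decide

lemma g_mem_2X0X1 : gg ∈
    Ideal.span {(MvPolynomial.C 2 : P), MvPolynomial.X 0, MvPolynomial.X 1} := by
  apply Ideal.sub_mem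
  · exact Ideal.mul_mem_right _ _ (Ideal.subset_span (by simp))
  · have : (2 : P) = MvPolynomial.C 2 := by norm_num
    rw [this]
    exact Ideal.subset_span (by simp)

lemma span_2etay_prime : (Ideal.span {(2 : ReesRing), eta, y}).IsPrime := by
  have hmapspan : Ideal.map mk
      (Ideal.span {(MvPolynomial.C 2 : P), MvPolynomial.X 0, MvPolynomial.X 1}) =
      Ideal.span {(2 : ReesRing), eta, y} := by
    rw [Ideal.map_span, Set.image_insert_eq, Set.image_insert_eq, Set.image_singleton, mk_C_two]
    rfl
  rw [← hmapspan]
  haveI : (Ideal.span {(MvPolynomial.C 2 : P), MvPolynomial.X 0,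
      MvPolynomial.X 1}).IsPrime := by
    rw [← ker_G2]; exact RingHom.ker_isPrime G2
  exact Ideal.map_isPrime_of_surjective mk_surjective
    (by rw [ker_mk, Ideal.span_le]; simpa using g_mem_2X0X1)

end Span2Eta


section Homogeneity

lemma isHom_intCast (a : ℤ) : IsHomogeneous 0 ((a : ℤ) : ReesRing) :=
  ⟨MvPolynomial.C a, MvPolynomial.isWeightedHomogeneous_C _ _, (mk_C_int a).symm⟩

lemma isHom_two : IsHomogeneous 0 (2 : ReesRing) := by
  have := isHom_intCast 2
  norm_num at this
  exact this

lemma isHom_eta : IsHomogeneous (-1) eta := by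
  refine ⟨MvPolynomial.X 0, ?_, rfl⟩
  have := MvPolynomial.isWeightedHomogeneous_X ℤ wt 0
  simpa [wt] using this

lemma isHom_y : IsHomogeneous 1 y := by
  refine ⟨MvPolynomial.X 1, ?_, rfl⟩
  have := MvPolynomial.isWeightedHomogeneous_X ℤ wt 1
  simpa [wt] using this

end Homogeneity

section Forward

lemma coeff_mem {J : Ideal ReesRing} (hJ : J.IsPrime) {c : ℤ} {t : ReesRing} {m : ℕ}
    (ht : t ∉ J) (h : ((c : ℤ) : ReesRing) * t ^ m ∈ J) : ((c : ℤ) : ReesRing) ∈ J := by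
  rcases hJ.mem_or_mem h with h' | h'
  · exact h'
  · exact absurd (hJ.mem_of_pow_mem m h') ht

set_option maxHeartbeats 1000000 in
lemma forward {J : Ideal ReesRing} (h : IsHomogeneousPrime J) :
    J = ⊥ ∨
      (∃ p : ℕ, p.Prime ∧ p ≠ 2 ∧ J = Ideal.span {(p : ReesRing)}) ∨
      J = Ideal.span {2, eta} ∨
      J = Ideal.span {2, y} ∨
      J = Ideal.span {2, eta, y} := by
  obtain ⟨hJ, S, hS, rfl⟩ := h
  have hstruct : ∀ s ∈ S, ∃ (c : ℤ) (m : ℕ),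
      s = ((c : ℤ) : ReesRing) * y ^ m ∨ s = ((c : ℤ) : ReesRing) * eta ^ m := by
    intro s hs
    obtain ⟨n, hn⟩ := hS s hs
    obtain ⟨c, hc | hc⟩ := structure_of_isHomogeneous hn
    · exact ⟨c, n.toNat, Or.inl hc⟩
    · exact ⟨c, (-n).toNat, Or.inr hc⟩
  by_cases h2 : (2 : ReesRing) ∈ Ideal.span S
  · -- 2 ∈ J
    have heven : ∀ c : ℤ, ((c : ℤ) : ReesRing) ∈ Ideal.span S → (2 : ℤ) ∣ c := by
      intro c hc
      by_contra hodd
      have h1 : (1 : ℤ) = c - 2 * (c / 2) := by omega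
      have hone : ((1 : ℤ) : ReesRing) ∈ Ideal.span S := by
        rw [h1]
        push_cast
        exact Ideal.sub_mem _ hc (Ideal.mul_mem_right _ _ h2)
      exact hJ.ne_top ((Ideal.eq_top_iff_one _).mpr (by simpa using hone))
    have hey : eta * y ∈ Ideal.span S := by rw [eta_mul_y]; exact h2
    by_cases he : eta ∈ Ideal.span S <;> by_cases hy : y ∈ Ideal.span S
    · -- J = (2, η, y)
      right; right; right; right
      apply le_antisymm
      · rw [Ideal.span_le]
        intro s hs
        obtain ⟨c, m, hc | hc⟩ := hstruct s hs <;> rw [hc] <;> rcases m with _ | m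
        · rw [pow_zero, mul_one]
          obtain ⟨k, hk⟩ := heven c (by
            have hmem := Ideal.subset_span hs
            rw [hc, pow_zero, mul_one] at hmem
            exact hmem)
          rw [hk]
          have hcast : ((2 * k : ℤ) : ReesRing) = 2 * ((k : ℤ) : ReesRing) := by
            push_cast; ring
          rw [hcast]
          exact Ideal.mul_mem_right _ _ (Ideal.subset_span (by simp))
        · rw [pow_succ, ← mul_assoc]
          exact Ideal.mul_mem_left _ _ (Ideal.subset_span (by simp))
        · rw [pow_zero, mul_one]
          obtain ⟨k, hk⟩ := heven c (by
            have hmem := Ideal.subset_span hs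
            rw [hc, pow_zero, mul_one] at hmem
            exact hmem)
          rw [hk]
          have hcast : ((2 * k : ℤ) : ReesRing) = 2 * ((k : ℤ) : ReesRing) := by
            push_cast; ring
          rw [hcast]
          exact Ideal.mul_mem_right _ _ (Ideal.subset_span (by simp))
        · rw [pow_succ, ← mul_assoc]
          exact Ideal.mul_mem_left _ _ (Ideal.subset_span (by simp))
      · rw [Ideal.span_le]
        rintro x hx
        simp only [Set.mem_insert_iff, Set.mem_singleton_iff] at hx
        rcases hx with rfl | rfl | rfl
        · exact h2
        · exact he
        · exact hy
    · -- J = (2, η)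
      right; right; left
      apply le_antisymm
      · rw [Ideal.span_le]
        intro s hs
        have hsJ : s ∈ Ideal.span S := Ideal.subset_span hs
        obtain ⟨c, m, hc | hc⟩ := hstruct s hs
        · -- s = c y^m, y ∉ J
          have hcJ : ((c : ℤ) : ReesRing) ∈ Ideal.span S :=
            coeff_mem hJ hy (by rw [← hc]; exact hsJ)
          obtain ⟨k, hk⟩ := heven c hcJ
          rw [hc, hk]
          have hcast : ((2 * k : ℤ) : ReesRing) * y ^ m =
              2 * (((k : ℤ) : ReesRing) * y ^ m) := by push_cast; ring
          rw [hcast]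
          exact Ideal.mul_mem_right _ _ (Ideal.subset_span (by simp))
        · rcases m with _ | m
          · rw [hc, pow_zero, mul_one]
            have hcJ : ((c : ℤ) : ReesRing) ∈ Ideal.span S := by
              rw [hc, pow_zero, mul_one] at hsJ
              exact hsJ
            obtain ⟨k, hk⟩ := heven c hcJ
            rw [hk]
            have hcast : ((2 * k : ℤ) : ReesRing) = 2 * ((k : ℤ) : ReesRing) := by
              push_cast; ring
            rw [hcast]
            exact Ideal.mul_mem_right _ _ (Ideal.subset_span (by simp))
          · rw [hc, pow_succ, ← mul_assoc]
            exact Ideal.mul_mem_left _ _ (Ideal.subset_span (by simp))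
      · rw [Ideal.span_le]
        rintro x hx
        simp only [Set.mem_insert_iff, Set.mem_singleton_iff] at hx
        rcases hx with rfl | rfl
        · exact h2
        · exact he
    · -- J = (2, y)
      right; right; right; left
      apply le_antisymm
      · rw [Ideal.span_le]
        intro s hs
        have hsJ : s ∈ Ideal.span S := Ideal.subset_span hs
        obtain ⟨c, m, hc | hc⟩ := hstruct s hs
        · rcases m with _ | m
          · rw [hc, pow_zero, mul_one]
            have hcJ : ((c : ℤ) : ReesRing) ∈ Ideal.span S := by
              rw [hc, pow_zero, mul_one] at hsJ
              exact hsJ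
            obtain ⟨k, hk⟩ := heven c hcJ
            rw [hk]
            have hcast : ((2 * k : ℤ) : ReesRing) = 2 * ((k : ℤ) : ReesRing) := by
              push_cast; ring
            rw [hcast]
            exact Ideal.mul_mem_right _ _ (Ideal.subset_span (by simp))
          · rw [hc, pow_succ, ← mul_assoc]
            exact Ideal.mul_mem_left _ _ (Ideal.subset_span (by simp))
        · have hcJ : ((c : ℤ) : ReesRing) ∈ Ideal.span S :=
            coeff_mem hJ he (by rw [← hc]; exact hsJ)
          obtain ⟨k, hk⟩ := heven c hcJ
          rw [hc, hk]
          have hcast : ((2 * k : ℤ) : ReesRing) * eta ^ m =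
              2 * (((k : ℤ) : ReesRing) * eta ^ m) := by push_cast; ring
          rw [hcast]
          exact Ideal.mul_mem_right _ _ (Ideal.subset_span (by simp))
      · rw [Ideal.span_le]
        rintro x hx
        simp only [Set.mem_insert_iff, Set.mem_singleton_iff] at hx
        rcases hx with rfl | rfl
        · exact h2
        · exact hy
    · -- both η, y ∉ J: contradiction
      exact absurd (hJ.mem_or_mem hey) (by tauto)
  · -- 2 ∉ J
    have hyn : y ∉ Ideal.span S := fun hmem =>
      h2 (by rw [← eta_mul_y]; exact Ideal.mul_mem_left _ _ hmem)
    have hen : eta ∉ Ideal.span S := fun hmem =>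
      h2 (by rw [← eta_mul_y]; exact Ideal.mul_mem_right _ _ hmem)
    have hcoef : ∀ s ∈ S, ∃ (c : ℤ) (m : ℕ),
        ((c : ℤ) : ReesRing) ∈ Ideal.span S ∧
        (s = ((c : ℤ) : ReesRing) * y ^ m ∨ s = ((c : ℤ) : ReesRing) * eta ^ m) := by
      intro s hs
      have hsJ : s ∈ Ideal.span S := Ideal.subset_span hs
      obtain ⟨c, m, hc | hc⟩ := hstruct s hs
      · exact ⟨c, m, coeff_mem hJ hyn (by rw [← hc]; exact hsJ), Or.inl hc⟩
      · exact ⟨c, m, coeff_mem hJ hen (by rw [← hc]; exact hsJ), Or.inr hc⟩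
    set I : Ideal ℤ := Ideal.comap (Int.castRingHom ReesRing) (Ideal.span S) with hI
    have hmemI : ∀ c : ℤ, c ∈ I ↔ ((c : ℤ) : ReesRing) ∈ Ideal.span S := by
      intro c
      rw [hI, Ideal.mem_comap]
      norm_num
    haveI hIp : I.IsPrime := Ideal.IsPrime.comap _
    obtain ⟨a, ha⟩ := (IsPrincipalIdealRing.principal I).principal
    rw [Ideal.submodule_span_eq] at ha
    by_cases ha0 : a = 0
    · left
      rw [eq_bot_iff, Ideal.span_le]
      intro s hs
      obtain ⟨c, m, hcJ, hc | hc⟩ := hcoef s hs <;>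
      · have hcI : c ∈ I := (hmemI c).mpr hcJ
        rw [ha, ha0, Ideal.span_singleton_eq_bot.mpr rfl, Ideal.mem_bot] at hcI
        rw [hc, hcI]
        push_cast
        simp
    · right; left
      have hpa : Prime a := by
        rw [ha] at hIp
        exact (Ideal.span_singleton_prime ha0).mp hIp
      have haI : a ∈ I := by rw [ha]; exact Ideal.subset_span rfl
      have haJ : ((a : ℤ) : ReesRing) ∈ Ideal.span S := (hmemI a).mp haI
      have hpJ : ((a.natAbs : ℕ) : ReesRing) ∈ Ideal.span S := by
        have hsq : (((a.natAbs : ℕ) : ℤ) : ReesRing) ∈ Ideal.span S := by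
          rcases Int.natAbs_eq a with h' | h'
          · rw [← h']
            exact haJ
          · have hna : ((a.natAbs : ℕ) : ℤ) = -a := by omega
            rw [hna]
            push_cast
            exact neg_mem haJ
        rw [Int.cast_natCast] at hsq
        exact hsq
      refine ⟨a.natAbs, Int.prime_iff_natAbs_prime.mp hpa, ?_, ?_⟩
      · intro hab
        apply h2
        rw [show (2 : ReesRing) = ((a.natAbs : ℕ) : ReesRing) from by rw [hab]; norm_num]
        exact hpJ
      · apply le_antisymm
        · rw [Ideal.span_le]
          intro s hs
          obtain ⟨c, m, hcJ, hcor⟩ := hcoef s hs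
          obtain ⟨t, hc⟩ : ∃ t : ReesRing, s = ((c : ℤ) : ReesRing) * t := by
            rcases hcor with hc | hc
            · exact ⟨_, hc⟩
            · exact ⟨_, hc⟩
          have hcI : c ∈ I := (hmemI c).mpr hcJ
          rw [ha, Ideal.mem_span_singleton] at hcI
          obtain ⟨k, hk⟩ := Int.natAbs_dvd.mpr hcI
          rw [SetLike.mem_coe, Ideal.mem_span_singleton]
          refine ⟨((k : ℤ) : ReesRing) * t, ?_⟩
          rw [hc, hk]
          rw [show ((a.natAbs : ℕ) : ReesRing) = (((a.natAbs : ℕ) : ℤ) : ReesRing) from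
            (Int.cast_natCast _).symm]
          push_cast
          ring
        · rw [Ideal.span_le]
          rintro x hx
          simp only [Set.mem_singleton_iff] at hx
          subst hx
          exact hpJ

end Forward

section Backward

lemma isHom_natCast (p : ℕ) : IsHomogeneous 0 ((p : ℕ) : ReesRing) := by
  have := isHom_intCast ((p : ℕ) : ℤ)
  rw [Int.cast_natCast] at this
  exact this

lemma backward {J : Ideal ReesRing}
    (h : J = ⊥ ∨ (∃ p : ℕ, p.Prime ∧ p ≠ 2 ∧ J = Ideal.span {(p : ReesRing)}) ∨
      J = Ideal.span {2, eta} ∨ J = Ideal.span {2, y} ∨ J = Ideal.span {2, eta, y}) :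
    IsHomogeneousPrime J := by
  rcases h with rfl | ⟨p, hp, hp2, rfl⟩ | rfl | rfl | rfl
  · exact ⟨bot_prime, ∅, by simp, Ideal.span_empty.symm⟩
  · refine ⟨span_p_prime hp hp2, {((p : ℕ) : ReesRing)}, ?_, rfl⟩
    rintro x hx
    rw [Set.mem_singleton_iff] at hx
    exact ⟨0, hx ▸ isHom_natCast p⟩
  · refine ⟨span_2eta_prime, {(2 : ReesRing), eta}, ?_, rfl⟩
    rintro x hx
    rcases hx with rfl | hx
    · exact ⟨0, isHom_two⟩
    · rw [Set.mem_singleton_iff] at hx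
      exact ⟨-1, hx ▸ isHom_eta⟩
  · refine ⟨span_2y_prime, {(2 : ReesRing), y}, ?_, rfl⟩
    rintro x hx
    rcases hx with rfl | hx
    · exact ⟨0, isHom_two⟩
    · rw [Set.mem_singleton_iff] at hx
      exact ⟨1, hx ▸ isHom_y⟩
  · refine ⟨span_2etay_prime, {(2 : ReesRing), eta, y}, ?_, rfl⟩
    rintro x hx
    rcases hx with rfl | rfl | hx
    · exact ⟨0, isHom_two⟩
    · exact ⟨-1, isHom_eta⟩
    · rw [Set.mem_singleton_iff] at hx
      exact ⟨1, hx ▸ isHom_y⟩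

end Backward

end ReesRing

open ReesRing in
/-- STATEMENT 3: the homogeneous prime ideals of `R = ℤ[η, y]/(η y - 2)` (graded with
`deg η = -1`, `deg y = 1`) are exactly `(0)`, `(p)` for odd primes `p`, `(2, η)`,
`(2, y)` and `(2, η, y)`. -/
theorem specH_reesRing :
    {J : Ideal ReesRing | IsHomogeneousPrime J} =
      {J : Ideal ReesRing |
        J = ⊥ ∨
        (∃ p : ℕ, p.Prime ∧ p ≠ 2 ∧ J = Ideal.span {(p : ReesRing)}) ∨
        J = Ideal.span {2, eta} ∨
        J = Ideal.span {2, y} ∨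
        J = Ideal.span {2, eta, y}} := by
  ext J
  simp only [Set.mem_setOf_eq]
  exact ⟨ReesRing.forward, ReesRing.backward⟩
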